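/- Let F be a formal power series over ℂ, let g and c be positive integers with gcd(g, c) = 1, and let n, t, k be natural numbers with t < g and n = t·c + g·k. Then the coefficient of X^n in F(X^g)·(1 - X^c)^{-1} equals the coefficient of X^k in F(X)·(1 - X^c)^{-1}, where F(X^g) denotes the substitution of X^g into F, and (1 - X^c)^{-1} is the multiplicative inverse of 1 - X^c in ℂ[[X]]. -/

import Mathlib

open PowerSeries Finset

lemma inv_one_sub_pow_eq (c : ℕ) (hc : 0 < c) :
    ((1 - PowerSeries.X ^ c : PowerSeries ℂ))⁻¹ =
      PowerSeries.mk (fun m => if c ∣ m then 1 else 0) := by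
  rw [eq_comm, PowerSeries.eq_inv_iff_mul_eq_one]
  · ext m
    rw [mul_sub, mul_one]
    simp only [map_sub, PowerSeries.coeff_mul_X_pow', coeff_mk, PowerSeries.coeff_one]
    rcases eq_or_ne m 0 with rfl | hm
    · simp [hc.not_ge]
    · rcases le_or_gt c m with h | h
      · simp only [h, if_true, hm, if_false]
        by_cases hd : c ∣ m
        · have : c ∣ m - c := (Nat.dvd_sub hd dvd_rfl)
          simp [hd, this]
        · have : ¬ c ∣ m - c := fun hdd => hd (by
            have := Nat.dvd_add hdd (dvd_refl c)
            rwa [Nat.sub_add_cancel h] at this)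
          simp [hd, this]
      · have hd : ¬ c ∣ m := fun hdd => hm (Nat.eq_zero_of_dvd_of_lt hdd h)
        simp [h.not_ge, hd, hm]
  · simp [PowerSeries.constantCoeff_X, hc.ne']

/-- For a positive integer `g`, the power series `F(X^g)` obtained from `F` by
substituting `X^g` for `X`: its coefficient at `n` is the coefficient of `F` at `n / g`
when `g ∣ n`, and `0` otherwise. -/
noncomputable def substXPow (g : ℕ) (F : PowerSeries ℂ) : PowerSeries ℂ :=
  PowerSeries.mk fun n => if g ∣ n then PowerSeries.coeff (n / g) F else 0

/-- If `gcd(g, c) = 1`, `t < g` and `n = t * c + g * k`, then the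
coefficient of `X ^ n` in `F(X^g) * (1 - X^c)⁻¹` equals the coefficient of `X ^ k` in
`F(X) * (1 - X^c)⁻¹`. -/
theorem coeff_substXPow_mul_inv (F : PowerSeries ℂ) (g c : ℕ) (hg : 0 < g) (hc : 0 < c)
    (hcop : Nat.Coprime g c) (n t k : ℕ) (ht : t < g) (hn : n = t * c + g * k) :
    PowerSeries.coeff n (substXPow g F * (1 - PowerSeries.X ^ c)⁻¹) =
      PowerSeries.coeff k (F * (1 - PowerSeries.X ^ c)⁻¹) := by
  rw [inv_one_sub_pow_eq c hc, PowerSeries.coeff_mul, PowerSeries.coeff_mul,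
    Finset.Nat.sum_antidiagonal_eq_sum_range_succ_mk, Finset.Nat.sum_antidiagonal_eq_sum_range_succ_mk]
  simp only [substXPow, coeff_mk]
  symm
  refine Finset.sum_of_injOn (fun j => g * j) ?_ ?_ ?_ ?_
  · intro a _ b _ h
    exact Nat.eq_of_mul_eq_mul_left hg h
  · intro j hj
    simp only [Finset.coe_range, Set.mem_Iio, Finset.mem_coe, Finset.mem_range] at *
    have : g * j ≤ g * k := Nat.mul_le_mul_left g (Nat.lt_succ_iff.mp hj)
    omega
  · intro m hm hm2
    by_cases hdm : g ∣ m
    · obtain ⟨j, rfl⟩ := hdm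
      have hjk : k < j := by
        by_contra h
        exact hm2 ⟨j, by simp [Finset.mem_range, Nat.lt_succ_iff, not_lt.mp h], rfl⟩
      have hle : g * j ≤ n := Nat.lt_succ_iff.mp (Finset.mem_range.mp hm)
      have heq : g * (j - k) + g * k = g * j := by
        rw [← Nat.mul_add]; congr 1; omega
      have hle2 : g * (j - k) ≤ t * c := by omega
      have : ¬ c ∣ n - g * j := by
        intro hd
        have h1 : n - g * j = t * c - g * (j - k) := by omega
        rw [h1] at hd
        have h2 : c ∣ g * (j - k) := by
          have := Nat.dvd_sub (dvd_mul_left c t) hd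
          rwa [Nat.sub_sub_self hle2] at this
        have h3 : c ∣ j - k := hcop.symm.dvd_of_dvd_mul_left h2
        have h4 : c ≤ j - k := Nat.le_of_dvd (by omega) h3
        have h5 : g * c ≤ g * (j - k) := Nat.mul_le_mul_left g h4
        have h6 : t * c < g * c := (Nat.mul_lt_mul_right hc).mpr ht
        omega
      simp [this, dvd_refl]
    · simp [hdm]
  · intro j hj
    have hj' : j ≤ k := Nat.lt_succ_iff.mp (Finset.mem_range.mp hj)
    have heq : g * (k - j) + g * j = g * k := by
      rw [← Nat.mul_add]; congr 1; omega
    have h1 : n - g * j = t * c + g * (k - j) := by omega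
    have h2 : (c ∣ k - j) ↔ (c ∣ n - g * j) := by
      rw [h1, Nat.dvd_add_right (dvd_mul_left c t)]
      constructor
      · exact fun h => h.mul_left g
      · exact fun h => hcop.symm.dvd_of_dvd_mul_left h
    simp only [Nat.mul_div_cancel_left _ hg, dvd_mul_right, if_true]
    by_cases hd : c ∣ k - j
    · simp [hd, h2.mp hd]
    · rw [if_neg hd, if_neg (fun h => hd (h2.mpr h))]
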